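/- Assume B is invertible. Let (θ₁, s₁, w₁) and (θ₂, s₂, w₂) satisfy the harmonic pencil equations with θ₁ ≠ 0, θ₂ ≠ 0, s₁ ≠ 0, s₂ ≠ 0 and θ₁² ≠ θ₂². Then s₁ᵀ B w₂ = 0 and w₁ᵀ Bᵀ s₂ = 0. -/

import Mathlib

open Matrix

noncomputable def enorm {ι : Type*} [Fintype ι] (v : ι → ℝ) : ℝ :=
  Real.sqrt (∑ i, v i ^ 2)

def eLast (m : ℕ) : Fin m → ℝ := fun i => if (i : ℕ) = m - 1 then 1 else 0

def HarmonicPencil {m : ℕ} (B : Matrix (Fin m) (Fin m) ℝ) (β θ : ℝ)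
    (s w : Fin m → ℝ) : Prop :=
  θ • B.mulVec w = (B * Bᵀ + β ^ 2 • vecMulVec (eLast m) (eLast m)).mulVec s ∧
  θ • Bᵀ.mulVec s = (Bᵀ * B).mulVec w

noncomputable def specNorm {m n : Type*} [Fintype m] [Fintype n] [DecidableEq n]
    (A : Matrix m n ℝ) : ℝ :=
  ‖LinearMap.toContinuousLinearMap (Matrix.toEuclideanLin A)‖

noncomputable def sep {n : Type*} [Fintype n] [DecidableEq n] (a : ℝ) (G : Matrix n n ℝ) : ℝ :=
  sInf {r | ∃ x : n → ℝ, _root_.enorm x = 1 ∧ r = _root_.enorm ((a • (1 : Matrix n n ℝ) - G).mulVec x)}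

noncomputable def sigmaMin {m n : Type*} [Fintype m] [Fintype n] (C : Matrix m n ℝ) : ℝ :=
  sSup {c | 0 ≤ c ∧ ∀ h, c * _root_.enorm h ≤ _root_.enorm (C.mulVec h)}

noncomputable def sinAngleVec {ι : Type*} [Fintype ι] (x y : ι → ℝ) : ℝ :=
  Real.sqrt (1 - (x ⬝ᵥ y) ^ 2 / (_root_.enorm x ^ 2 * _root_.enorm y ^ 2))

noncomputable def toE {ι : Type*} (v : ι → ℝ) : EuclideanSpace ℝ ι :=
  (WithLp.equiv 2 (ι → ℝ)).symm v

noncomputable def ofE {ι : Type*} (v : EuclideanSpace ℝ ι) : ι → ℝ :=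
  WithLp.equiv 2 (ι → ℝ) v

noncomputable def sinAngleSub {ι : Type*} [Fintype ι] (x : EuclideanSpace ℝ ι)
    (E : Submodule ℝ (EuclideanSpace ℝ ι)) : ℝ :=
  ‖x - (E.orthogonalProjection x : EuclideanSpace ℝ ι)‖ / ‖x‖

def Atilde {M N : ℕ} (A : Matrix (Fin M) (Fin N) ℝ) :
    Matrix (Fin M ⊕ Fin N) (Fin M ⊕ Fin N) ℝ :=
  fromBlocks 0 A Aᵀ 0

def Btilde {m : ℕ} (B : Matrix (Fin m) (Fin m) ℝ) :
    Matrix (Fin m ⊕ Fin m) (Fin m ⊕ Fin m) ℝ :=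
  fromBlocks 0 B Bᵀ 0

noncomputable def Ctilde {m : ℕ} (B : Matrix (Fin m) (Fin m) ℝ) (β : ℝ) :
    Matrix (Fin m ⊕ Fin m) (Fin m ⊕ Fin m) ℝ :=
  fromBlocks (B * Bᵀ + β ^ 2 • vecMulVec (eLast m) (eLast m)) 0 0 (Bᵀ * B)

noncomputable def colSpanE {M N m : ℕ} (P : Matrix (Fin M) (Fin m) ℝ)
    (Q : Matrix (Fin N) (Fin m) ℝ) : Submodule ℝ (EuclideanSpace ℝ (Fin M ⊕ Fin N)) :=
  Submodule.span ℝ {z | ∃ x y : Fin m → ℝ, z = toE (Sum.elim (P.mulVec x) (Q.mulVec y))}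

noncomputable def Mrho {m : ℕ} (B : Matrix (Fin m) (Fin m) ℝ) (β ρ : ℝ) :
    Matrix ((Fin m ⊕ Fin m) ⊕ Unit) (Fin m ⊕ Fin m) ℝ :=
  Matrix.fromRows
    (fromBlocks (-(ρ • (1 : Matrix (Fin m) (Fin m) ℝ))) B Bᵀ (-(ρ • 1)))
    (Matrix.of fun (_ : Unit) j => Sum.elim (β • eLast m) (0 : Fin m → ℝ) j)

theorem stmt1 (m : ℕ) (hm : 0 < m) (B : Matrix (Fin m) (Fin m) ℝ) (hB : IsUnit B)
    (β θ₁ θ₂ : ℝ) (s₁ w₁ s₂ w₂ : Fin m → ℝ)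
    (h1 : HarmonicPencil B β θ₁ s₁ w₁) (h2 : HarmonicPencil B β θ₂ s₂ w₂)
    (hθ1 : θ₁ ≠ 0) (hθ2 : θ₂ ≠ 0) (hs1 : s₁ ≠ 0) (hs2 : s₂ ≠ 0)
    (hθ : θ₁ ^ 2 ≠ θ₂ ^ 2) :
    s₁ ⬝ᵥ B.mulVec w₂ = 0 ∧ w₁ ⬝ᵥ Bᵀ.mulVec s₂ = 0 := by
  obtain ⟨h1a, h1b⟩ := h1
  obtain ⟨h2a, h2b⟩ := h2
  set C₁ : Matrix (Fin m) (Fin m) ℝ :=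
    B * Bᵀ + β ^ 2 • vecMulVec (eLast m) (eLast m) with hC1
  set C₂ : Matrix (Fin m) (Fin m) ℝ := Bᵀ * B with hC2
  have hvT : (vecMulVec (eLast m) (eLast m))ᵀ = vecMulVec (eLast m) (eLast m) := by
    ext i j; simp [vecMulVec_apply, transpose_apply, mul_comm]
  have hC1T : C₁ᵀ = C₁ := by
    simp [hC1, transpose_add, transpose_smul, transpose_mul, hvT]
  have hC2T : C₂ᵀ = C₂ := by simp [hC2, transpose_mul]
  set a := s₁ ⬝ᵥ B.mulVec w₂ with ha
  set b := s₂ ⬝ᵥ B.mulVec w₁ with hb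
  have e1 : θ₂ * a = s₁ ⬝ᵥ C₁.mulVec s₂ := by
    rw [← h2a, dotProduct_smul, smul_eq_mul, ha]
  have e2 : θ₁ * b = s₂ ⬝ᵥ C₁.mulVec s₁ := by
    rw [← h1a, dotProduct_smul, smul_eq_mul, hb]
  have sym1 : s₁ ⬝ᵥ C₁.mulVec s₂ = s₂ ⬝ᵥ C₁.mulVec s₁ := by
    rw [Matrix.dotProduct_mulVec]
    nth_rewrite 1 [← hC1T]
    rw [Matrix.vecMul_transpose, dotProduct_comm]
  have r1 : θ₂ * a = θ₁ * b := by rw [e1, sym1, ← e2]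
  have hb' : w₁ ⬝ᵥ Bᵀ.mulVec s₂ = b := by
    rw [Matrix.dotProduct_mulVec, Matrix.vecMul_transpose, dotProduct_comm, hb]
  have ha' : w₂ ⬝ᵥ Bᵀ.mulVec s₁ = a := by
    rw [Matrix.dotProduct_mulVec, Matrix.vecMul_transpose, dotProduct_comm, ha]
  have f1 : θ₂ * b = w₁ ⬝ᵥ C₂.mulVec w₂ := by
    rw [← h2b, dotProduct_smul, smul_eq_mul, hb']
  have f2 : θ₁ * a = w₂ ⬝ᵥ C₂.mulVec w₁ := by
    rw [← h1b, dotProduct_smul, smul_eq_mul, ha']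
  have sym2 : w₁ ⬝ᵥ C₂.mulVec w₂ = w₂ ⬝ᵥ C₂.mulVec w₁ := by
    rw [Matrix.dotProduct_mulVec]
    nth_rewrite 1 [← hC2T]
    rw [Matrix.vecMul_transpose, dotProduct_comm]
  have r2 : θ₂ * b = θ₁ * a := by rw [f1, sym2, ← f2]
  have key : (θ₁ ^ 2 - θ₂ ^ 2) * a = 0 := by linear_combination (-θ₂) * r1 + (-θ₁) * r2
  have ha0 : a = 0 := by
    rcases mul_eq_zero.mp key with h' | h'
    · exact absurd (by linarith [sub_eq_zero.mp h']) hθ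
    · exact h'
  have hb0 : b = 0 := by
    have h : θ₁ * b = 0 := by rw [← r1, ha0, mul_zero]
    exact (mul_eq_zero.mp h).resolve_left hθ1
  exact ⟨ha0, by rw [hb', hb0]⟩
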